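/- Let H be a Hopf algebra with a multiplicative matrix v = (v^μ_ν) (Δ(v^μ_ν) = Σ v^μ_λ ⊗ v^λ_ν, ε(v^μ_ν) = δ^μ_ν) preserving a nondegenerate bilinear form b: Σ b_{μν} v^μ_λ v^ν_ρ = b_{λρ}·1. Then the matrix v also preserves the inverse form: Σ b^{νλ} v^σ_ν v^τ_λ = b^{στ}·1 for all σ, τ, where (b^{μν}) is the inverse matrix of (b_{μν}). -/
import Mathlib


open TensorProduct

/-- If a Hopf algebra `H` has a multiplicative matrix `v` preserving a
nondegenerate bilinear form `b` (with matrix `B` and inverse `B'`), then `v` also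
preserves the inverse form: `Σ b^{νλ} v^σ_ν v^τ_λ = b^{στ}·1`. -/
theorem stmt_10 {K H : Type*} [Field K] [Ring H] [HopfAlgebra K H]
    {n : ℕ} (hn : 2 ≤ n)
    (B B' : Matrix (Fin n) (Fin n) K) (hBB' : B * B' = 1) (hB'B : B' * B = 1)
    (v : Fin n → Fin n → H)
    (hcomul : ∀ μ ν : Fin n,
      Coalgebra.comul (R := K) (v μ ν) = ∑ lam : Fin n, v μ lam ⊗ₜ[K] v lam ν)
    (hcounit : ∀ μ ν : Fin n,
      Coalgebra.counit (R := K) (v μ ν) = if μ = ν then (1 : K) else 0)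
    (hpres : ∀ lam ρ : Fin n,
      ∑ μ : Fin n, ∑ ν : Fin n, B μ ν • (v μ lam * v ν ρ) = B lam ρ • (1 : H)) :
    ∀ σ τ : Fin n,
      ∑ ν : Fin n, ∑ lam : Fin n, B' ν lam • (v σ ν * v τ lam) = B' σ τ • (1 : H) := by
  intro σ τ
  set V : Matrix (Fin n) (Fin n) H := Matrix.of v with hV
  set W : Matrix (Fin n) (Fin n) H :=
    Matrix.of fun μ ν => HopfAlgebra.antipode (R := K) (v μ ν) with hW
  set f : K →+* H := algebraMap K H with hf
  set Bh : Matrix (Fin n) (Fin n) H := B.map f with hBh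
  set B'h : Matrix (Fin n) (Fin n) H := B'.map f with hB'h
  -- V * W = 1 from the antipode axiom (lTensor version)
  have hVW : V * W = 1 := by
    ext μ ν
    have h := HopfAlgebra.mul_antipode_lTensor_comul_apply (R := K) (A := H) (v μ ν)
    rw [hcomul, hcounit] at h
    simp only [map_sum, LinearMap.lTensor_tmul, LinearMap.mul'_apply] at h
    simp only [Matrix.mul_apply, hV, hW, Matrix.of_apply, h, Matrix.one_apply]
    split <;> simp
  -- Vᵀ * Bh * V = Bh from hpres
  have hpres' : V.transpose * Bh * V = Bh := by
    ext lam ρ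
    have h := hpres lam ρ
    simp only [Matrix.mul_apply, Matrix.transpose_apply, Matrix.map_apply, hV, hBh,
      Matrix.of_apply, Finset.sum_mul]
    rw [Algebra.algebraMap_eq_smul_one, ← h, Finset.sum_comm]
    refine Finset.sum_congr rfl fun ν _ => Finset.sum_congr rfl fun μ _ => ?_
    rw [Algebra.smul_def, Algebra.commutes, mul_assoc, Algebra.commutes, ← mul_assoc]
  have hBB'h : Bh * B'h = 1 := by
    rw [hBh, hB'h, ← Matrix.map_mul, hBB', Matrix.map_one f f.map_zero f.map_one]
  have hB'Bh : B'h * Bh = 1 := by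
    rw [hBh, hB'h, ← Matrix.map_mul, hB'B, Matrix.map_one f f.map_zero f.map_one]
  -- key: Vᵀ * Bh = Bh * W
  have hkey : V.transpose * Bh = Bh * W := by
    calc V.transpose * Bh = V.transpose * Bh * (V * W) := by rw [hVW, mul_one]
      _ = (V.transpose * Bh * V) * W := by simp only [mul_assoc]
      _ = Bh * W := by rw [hpres']
  have hfinal : V * B'h * V.transpose = B'h := by
    have h1 : V * B'h * V.transpose * Bh = 1 := by
      calc V * B'h * V.transpose * Bh = V * B'h * (V.transpose * Bh) := by simp only [mul_assoc]
        _ = V * (B'h * Bh) * W := by rw [hkey]; simp only [mul_assoc]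
        _ = V * W := by rw [hB'Bh, mul_one]
        _ = 1 := hVW
    calc V * B'h * V.transpose
        = V * B'h * V.transpose * (Bh * B'h) := by rw [hBB'h, mul_one]
      _ = (V * B'h * V.transpose * Bh) * B'h := by simp only [mul_assoc]
      _ = B'h := by rw [h1, one_mul]
  have : (V * B'h * V.transpose) σ τ = B'h σ τ := by rw [hfinal]
  simp only [Matrix.mul_apply, Matrix.transpose_apply, Matrix.map_apply, hV, hB'h,
    Matrix.of_apply] at this
  rw [Algebra.algebraMap_eq_smul_one] at this
  rw [← this, Finset.sum_comm]
  refine Finset.sum_congr rfl fun lam _ => ?_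
  rw [Finset.sum_mul]
  refine Finset.sum_congr rfl fun ν _ => ?_
  rw [Algebra.smul_def, ← mul_assoc, Algebra.commutes, mul_assoc]
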